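/- arXiv:2501.13627 — 5 statements merged into one kernel-verified Lean document; each statement's English description precedes it below -/
import Mathlib

section
/- For m = 2 and v₀ = 0, for linearly independent v₁, v₂ ∈ ℝ^N, the quantity Λ(0, v₁, v₂) equals max{|v₁|, |v₂|} / sqrt(|v₁|²|v₂|² − ⟨v₁,v₂⟩²). -/
private lemma aux_expand {N : ℕ} (u v : EuclideanSpace ℝ (Fin N)) (a b : ℝ) :
    ‖a • u + b • v‖ ^ 2 =
      a ^ 2 * ‖u‖ ^ 2 + 2 * a * b * (inner ℝ u v : ℝ) + b ^ 2 * ‖v‖ ^ 2 := by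
  rw [← real_inner_self_eq_norm_sq]
  simp only [inner_add_left, inner_add_right, real_inner_smul_left, real_inner_smul_right,
    real_inner_self_eq_norm_sq, real_inner_comm v u, norm_smul, mul_pow,
    Real.norm_eq_abs, sq_abs]
  ring

private lemma aux_bound {N : ℕ} (u v : EuclideanSpace ℝ (Fin N)) (a b : ℝ)
    (hD : 0 < ‖u‖ ^ 2 * ‖v‖ ^ 2 - (inner ℝ u v : ℝ) ^ 2)
    (h : ‖a • u + b • v‖ = 1) :
    |a| ≤ ‖v‖ / Real.sqrt (‖u‖ ^ 2 * ‖v‖ ^ 2 - (inner ℝ u v : ℝ) ^ 2) := by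
  set K : ℝ := inner ℝ u v with hK
  have hK' : (inner ℝ v u : ℝ) = K := (real_inner_comm u v).trans hK.symm
  set D : ℝ := ‖u‖ ^ 2 * ‖v‖ ^ 2 - K ^ 2 with hDdef
  set s : ℝ := Real.sqrt D with hs
  have hs0 : 0 < s := Real.sqrt_pos.mpr hD
  have hs2 : s ^ 2 = D := Real.sq_sqrt hD.le
  set x := a • u + b • v with hx
  set w : EuclideanSpace ℝ (Fin N) := ‖v‖ ^ 2 • u - K • v with hw
  have hinner : (inner ℝ x w : ℝ) = a * D := by
    simp only [hx, hw, hDdef, inner_add_left, inner_sub_right, real_inner_smul_left,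
      real_inner_smul_right, real_inner_self_eq_norm_sq, hK']
    ring
  have hwn : ‖w‖ ^ 2 = ‖v‖ ^ 2 * D := by
    rw [← real_inner_self_eq_norm_sq]
    simp only [hw, hDdef, inner_sub_left, inner_sub_right, real_inner_smul_left,
      real_inner_smul_right, real_inner_self_eq_norm_sq, hK', norm_smul, mul_pow,
      Real.norm_eq_abs, sq_abs]
    ring
  have hwnorm : ‖w‖ = ‖v‖ * s := by
    have h1 : ‖w‖ ^ 2 = (‖v‖ * s) ^ 2 := by rw [hwn, mul_pow, hs2]
    nlinarith [norm_nonneg w, mul_nonneg (norm_nonneg v) hs0.le, h1,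
      sq_nonneg (‖w‖ - ‖v‖ * s), sq_nonneg (‖w‖ + ‖v‖ * s)]
  have hcs : |a * D| ≤ ‖v‖ * s := by
    calc |a * D| = |(inner ℝ x w : ℝ)| := by rw [hinner]
    _ ≤ ‖x‖ * ‖w‖ := abs_real_inner_le_norm x w
    _ = ‖v‖ * s := by rw [h, hwnorm, one_mul]
  rw [abs_mul, abs_of_pos hD, ← hs2] at hcs
  rw [le_div_iff₀ hs0]
  nlinarith [abs_nonneg a, hcs, hs0]

private lemma aux_mem {N : ℕ} (u v : EuclideanSpace ℝ (Fin N))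
    (hnv : 0 < ‖v‖) (hle : ‖u‖ ≤ ‖v‖)
    (hD : 0 < ‖u‖ ^ 2 * ‖v‖ ^ 2 - (inner ℝ u v : ℝ) ^ 2) :
    ∃ a b : ℝ, ‖a • u + b • v‖ = 1 ∧
      max |a| |b| = ‖v‖ / Real.sqrt (‖u‖ ^ 2 * ‖v‖ ^ 2 - (inner ℝ u v : ℝ) ^ 2) := by
  set K : ℝ := inner ℝ u v with hK
  set D : ℝ := ‖u‖ ^ 2 * ‖v‖ ^ 2 - K ^ 2 with hDdef
  set s : ℝ := Real.sqrt D with hs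
  have hs0 : 0 < s := Real.sqrt_pos.mpr hD
  have hs2 : s ^ 2 = D := Real.sq_sqrt hD.le
  refine ⟨‖v‖ / s, -K / (‖v‖ * s), ?_, ?_⟩
  · have key : (‖v‖ / s) ^ 2 * ‖u‖ ^ 2 + 2 * (‖v‖ / s) * (-K / (‖v‖ * s)) * K
        + (-K / (‖v‖ * s)) ^ 2 * ‖v‖ ^ 2 = (‖u‖ ^ 2 * ‖v‖ ^ 2 - K ^ 2) / s ^ 2 := by
      field_simp
      ring
    have hsq : ‖(‖v‖ / s) • u + (-K / (‖v‖ * s)) • v‖ ^ 2 = 1 := by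
      rw [aux_expand, ← hK, key, hs2, ← hDdef, div_self hD.ne']
    nlinarith [norm_nonneg ((‖v‖ / s) • u + (-K / (‖v‖ * s)) • v), hsq]
  · have ha : |‖v‖ / s| = ‖v‖ / s := abs_of_pos (div_pos hnv hs0)
    have hKn : |K| ≤ ‖u‖ * ‖v‖ := by rw [hK]; exact abs_real_inner_le_norm u v
    have hb : |(-K) / (‖v‖ * s)| ≤ ‖v‖ / s := by
      rw [abs_div, abs_neg, abs_of_pos (mul_pos hnv hs0),
        div_le_div_iff₀ (mul_pos hnv hs0) hs0]
      nlinarith [mul_le_mul_of_nonneg_right hKn hs0.le,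
        mul_le_mul_of_nonneg_right (mul_le_mul_of_nonneg_right hle (norm_nonneg v)) hs0.le]
    rw [ha, max_eq_left hb]

/-- For `v₀ = 0` and linearly independent `v₁, v₂ ∈ ℝ^N`,
`Λ(0, v₁, v₂) = max{‖v₁‖, ‖v₂‖} / sqrt(‖v₁‖²‖v₂‖² − ⟨v₁,v₂⟩²)`. -/
theorem stmt_3 (N : ℕ) (v₁ v₂ : EuclideanSpace ℝ (Fin N))
    (hind : LinearIndependent ℝ ![v₁, v₂])
    (Lam : ℝ)
    (hLam : IsGreatest {c : ℝ | ∃ a b : ℝ, ‖a • v₁ + b • v₂‖ = 1 ∧ c = max |a| |b|} Lam) :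
    Lam = max ‖v₁‖ ‖v₂‖ /
      Real.sqrt (‖v₁‖ ^ 2 * ‖v₂‖ ^ 2 - (inner ℝ v₁ v₂ : ℝ) ^ 2) := by
  obtain ⟨hv₂, hnd⟩ := linearIndependent_fin2.mp hind
  simp only [Matrix.cons_val_one, Matrix.head_cons, Matrix.cons_val_zero] at hv₂ hnd
  have hv₁ : v₁ ≠ 0 := by
    intro h
    exact hnd 0 (by simp [h])
  have hn1 : (0:ℝ) < ‖v₁‖ := norm_pos_iff.mpr hv₁
  have hn2 : (0:ℝ) < ‖v₂‖ := norm_pos_iff.mpr hv₂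
  have h1 : (inner ℝ v₂ v₁ : ℝ) < ‖v₂‖ * ‖v₁‖ := by
    rw [inner_lt_norm_mul_iff_real]
    intro h
    apply hnd (‖v₁‖ / ‖v₂‖)
    rw [div_eq_mul_inv, mul_comm, mul_smul, h, smul_smul, inv_mul_cancel₀ hn2.ne', one_smul]
  have h2 : -(inner ℝ v₂ v₁ : ℝ) < ‖v₂‖ * ‖v₁‖ := by
    have h2' : (inner ℝ v₂ (-v₁) : ℝ) < ‖v₂‖ * ‖-v₁‖ := by
      rw [inner_lt_norm_mul_iff_real]
      intro h
      rw [norm_neg, smul_neg] at h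
      apply hnd (-(‖v₁‖ / ‖v₂‖))
      rw [neg_smul, div_eq_mul_inv, mul_comm, mul_smul, h, smul_neg, neg_neg, smul_smul,
        inv_mul_cancel₀ hn2.ne', one_smul]
    rw [norm_neg, inner_neg_right] at h2'
    linarith
  have hsymm : (inner ℝ v₁ v₂ : ℝ) = (inner ℝ v₂ v₁ : ℝ) := real_inner_comm v₂ v₁
  have hD : 0 < ‖v₁‖ ^ 2 * ‖v₂‖ ^ 2 - (inner ℝ v₁ v₂ : ℝ) ^ 2 := by
    rw [hsymm]
    nlinarith [h1, h2, mul_pos hn1 hn2]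
  have hD' : 0 < ‖v₂‖ ^ 2 * ‖v₁‖ ^ 2 - (inner ℝ v₂ v₁ : ℝ) ^ 2 := by
    rw [← hsymm]; nlinarith [hD]
  have hflip : ‖v₂‖ ^ 2 * ‖v₁‖ ^ 2 - (inner ℝ v₂ v₁ : ℝ) ^ 2
      = ‖v₁‖ ^ 2 * ‖v₂‖ ^ 2 - (inner ℝ v₁ v₂ : ℝ) ^ 2 := by rw [hsymm]; ring
  apply le_antisymm
  · obtain ⟨a, b, hab, hc⟩ := hLam.1
    rw [hc]
    have hA := aux_bound v₁ v₂ a b hD hab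
    have hB := aux_bound v₂ v₁ b a hD' (by rwa [add_comm] at hab)
    rw [hflip] at hB
    rcases le_total ‖v₁‖ ‖v₂‖ with hle | hle
    · rw [max_eq_right hle]
      exact max_le hA (hB.trans (by gcongr))
    · rw [max_eq_left hle]
      exact max_le (hA.trans (by gcongr)) hB
  · apply hLam.2
    rcases le_total ‖v₁‖ ‖v₂‖ with hle | hle
    · obtain ⟨a, b, hab, hm⟩ := aux_mem v₁ v₂ hn2 hle hD
      rw [max_eq_right hle]
      exact ⟨a, b, hab, hm.symm⟩
    · obtain ⟨a, b, hab, hm⟩ := aux_mem v₂ v₁ hn1 hle hD'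
      rw [max_eq_left hle]
      refine ⟨b, a, by rwa [add_comm], ?_⟩
      rw [max_comm, hm, hflip]
end

section
/- Let Δ ⊂ ℝ^m be a linear simplex written as the join of two opposing faces A and B, with join parameter t : Δ → [0,1] the affine function equal to 0 on A and 1 on B. Let u₁, u₂, v : Δ → ℝ^n be smooth maps and define s_i = t·u_i + (1−t)·v for i = 1,2. Then the C⁰-distance satisfies d_{C⁰}(s₁, s₂) ≤ d_{C⁰}(u₁, u₂), and each partial derivative satisfies |∂_j(s₁ − s₂)(x)| ≤ (1/rmin(Δ))·d_{C⁰}(u₁, u₂) + d_{C¹}(u₁, u₂) for all x ∈ Δ, using that the partial derivatives of t are bounded in absolute value by 1/rmin(Δ). -/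
/-- interpolation over a join. With `t` the join parameter (affine, `0` on `A`,
`1` on `B`, values in `[0,1]` on `Δ`, partial derivatives bounded by `1/rmin(Δ)`), and
`sᵢ = t·uᵢ + (1−t)·v`, we get `d_{C⁰}(s₁,s₂) ≤ d_{C⁰}(u₁,u₂)` and
`|∂ⱼ(s₁−s₂)(x)| ≤ (1/rmin)·d_{C⁰}(u₁,u₂) + d_{C¹}(u₁,u₂)` on `Δ`. -/
theorem stmt_4 (m n : ℕ)
    (Δ A B : Set (EuclideanSpace ℝ (Fin m)))
    (hΔ : Δ = convexHull ℝ (A ∪ B))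
    (t : EuclideanSpace ℝ (Fin m) →ᵃ[ℝ] ℝ)
    (htA : ∀ x ∈ A, t x = 0) (htB : ∀ x ∈ B, t x = 1)
    (ht01 : ∀ x ∈ Δ, t x ∈ Set.Icc (0 : ℝ) 1)
    (rmin : ℝ) (hrmin : 0 < rmin)
    (ht' : ∀ j : Fin m, |t.linear (EuclideanSpace.single j 1)| ≤ 1 / rmin)
    (u₁ u₂ v : EuclideanSpace ℝ (Fin m) → EuclideanSpace ℝ (Fin n))
    (hu₁ : ContDiff ℝ 1 u₁) (hu₂ : ContDiff ℝ 1 u₂) (hv : ContDiff ℝ 1 v)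
    (ε₀ ε₁ : ℝ)
    (h0 : ∀ x ∈ Δ, ‖u₁ x - u₂ x‖ ≤ ε₀)
    (h1 : ∀ x ∈ Δ, ‖fderiv ℝ u₁ x - fderiv ℝ u₂ x‖ ≤ ε₁)
    (s₁ s₂ : EuclideanSpace ℝ (Fin m) → EuclideanSpace ℝ (Fin n))
    (hs₁ : ∀ x, s₁ x = t x • u₁ x + (1 - t x) • v x)
    (hs₂ : ∀ x, s₂ x = t x • u₂ x + (1 - t x) • v x) :
    (∀ x ∈ Δ, ‖s₁ x - s₂ x‖ ≤ ε₀) ∧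
    (∀ x ∈ Δ, ∀ j : Fin m,
      ‖fderiv ℝ (fun y => s₁ y - s₂ y) x (EuclideanSpace.single j 1)‖ ≤
        (1 / rmin) * ε₀ + ε₁) := by
  have hdiff : ∀ y, s₁ y - s₂ y = t y • (u₁ y - u₂ y) := by
    intro y
    rw [hs₁, hs₂, smul_sub]
    abel
  -- derivative of t
  have htL : ∀ x, HasFDerivAt (fun y => t y)
      (LinearMap.toContinuousLinearMap t.linear) x := by
    intro x
    have : (fun y => t y) = fun y => t.linear y + t 0 := by
      funext y
      conv_lhs => rw [AffineMap.decomp t]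
      simp
    rw [this]
    exact (LinearMap.toContinuousLinearMap t.linear).hasFDerivAt.add_const (t 0)
  constructor
  · intro x hx
    rw [hdiff]
    have h01 := ht01 x hx
    calc ‖t x • (u₁ x - u₂ x)‖ = |t x| * ‖u₁ x - u₂ x‖ := norm_smul _ _
      _ ≤ 1 * ε₀ := by
          apply mul_le_mul
          · rw [abs_of_nonneg h01.1]; exact h01.2
          · exact h0 x hx
          · positivity
          · norm_num
      _ = ε₀ := one_mul _
  · intro x hx j
    have hd₁ := (hu₁.differentiable one_ne_zero) x
    have hd₂ := (hu₂.differentiable one_ne_zero) x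
    have hder : HasFDerivAt (fun y => s₁ y - s₂ y)
        (t x • (fderiv ℝ u₁ x - fderiv ℝ u₂ x)
          + (LinearMap.toContinuousLinearMap t.linear).smulRight (u₁ x - u₂ x)) x := by
      have h := (htL x).smul ((hd₁.hasFDerivAt).sub (hd₂.hasFDerivAt))
      have : (fun y => s₁ y - s₂ y) = fun y => t y • (u₁ y - u₂ y) := funext hdiff
      rw [this]
      exact h
    rw [hder.fderiv]
    have h01 := ht01 x hx
    have hw : ‖(EuclideanSpace.single j (1:ℝ))‖ = 1 := by
      simp [EuclideanSpace.norm_single]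
    calc ‖(t x • (fderiv ℝ u₁ x - fderiv ℝ u₂ x)
          + (LinearMap.toContinuousLinearMap t.linear).smulRight (u₁ x - u₂ x))
          (EuclideanSpace.single j 1)‖
        ≤ ‖(t x • (fderiv ℝ u₁ x - fderiv ℝ u₂ x)) (EuclideanSpace.single j 1)‖
          + ‖((LinearMap.toContinuousLinearMap t.linear).smulRight (u₁ x - u₂ x))
              (EuclideanSpace.single j 1)‖ := norm_add_le _ _
      _ ≤ ε₁ + (1 / rmin) * ε₀ := by
          gcongr ?_ + ?_
          · have : ‖(t x • (fderiv ℝ u₁ x - fderiv ℝ u₂ x)) (EuclideanSpace.single j 1)‖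
                = |t x| * ‖(fderiv ℝ u₁ x - fderiv ℝ u₂ x) (EuclideanSpace.single j 1)‖ := by
              simp [norm_smul]
            rw [this]
            calc |t x| * ‖(fderiv ℝ u₁ x - fderiv ℝ u₂ x) (EuclideanSpace.single j 1)‖
                ≤ 1 * (‖fderiv ℝ u₁ x - fderiv ℝ u₂ x‖ * ‖(EuclideanSpace.single j (1:ℝ))‖) := by
                  apply mul_le_mul
                  · rw [abs_of_nonneg h01.1]; exact h01.2
                  · exact (fderiv ℝ u₁ x - fderiv ℝ u₂ x).le_opNorm _
                  · positivity
                  · norm_num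
              _ = ‖fderiv ℝ u₁ x - fderiv ℝ u₂ x‖ := by rw [hw]; ring
              _ ≤ ε₁ := h1 x hx
          · have : ‖((LinearMap.toContinuousLinearMap t.linear).smulRight (u₁ x - u₂ x))
                (EuclideanSpace.single j 1)‖
                = |t.linear (EuclideanSpace.single j 1)| * ‖u₁ x - u₂ x‖ := by
              simp [norm_smul]
            rw [this]
            exact mul_le_mul (ht' j) (h0 x hx) (norm_nonneg _) (by positivity)
      _ = (1 / rmin) * ε₀ + ε₁ := by ring
end

section
/- Let Δ ⊂ ℝ^m be a linear simplex spanned as the join of opposing faces A and B. Let v : A → ℝ^n be affine and u₁, u₂ : B → ℝ^n be affine maps, and let s_i : Δ → ℝ^n be the unique affine map agreeing with v on A and with u_i on B, for i = 1,2. Then d_{C⁰}(s₁, s₂) ≤ d_{C⁰}(u₁, u₂), and the derivatives (which are constant linear maps D₁, D₂) satisfy ‖D₁ − D₂‖ ≤ C · d_{C⁰}(u₁, u₂) · Λ(Δ) for a constant C depending only on m and n. -/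
/-- joins of affine maps. If `s₁, s₂` are affine maps on a simplex `Δ` (vertices
`v`), agreeing on the face `A` (vertices indexed by `I`) and `C⁰`-close on the opposing face
`B` (vertices indexed by `Iᶜ`), then `d_{C⁰}(s₁,s₂) ≤ ε` on `Δ` and their (constant) derivatives
satisfy `‖D₁ − D₂‖ ≤ C · ε · Λ(Δ)` for a constant `C` depending only on `m` and `n`. -/
theorem stmt_5 (m n : ℕ) :
    ∃ C : ℝ, 0 < C ∧
      ∀ (v : Fin (m + 1) → EuclideanSpace ℝ (Fin m)),
        AffineIndependent ℝ v →
        ∀ I : Finset (Fin (m + 1)), I.Nonempty → Iᶜ.Nonempty →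
        ∀ (s₁ s₂ : EuclideanSpace ℝ (Fin m) →ᵃ[ℝ] EuclideanSpace ℝ (Fin n)) (ε Lam : ℝ),
          (∀ x ∈ convexHull ℝ (v '' (I : Set (Fin (m + 1)))), s₁ x = s₂ x) →
          (∀ x ∈ convexHull ℝ (v '' ((Iᶜ : Finset (Fin (m + 1))) : Set (Fin (m + 1)))),
            ‖s₁ x - s₂ x‖ ≤ ε) →
          IsGreatest {c : ℝ | ∃ lam : Fin m → ℝ,
            ‖∑ i : Fin m, lam i • (v i.succ - v 0)‖ = 1 ∧ ∃ i, c = |lam i|} Lam →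
          (∀ x ∈ convexHull ℝ (Set.range v), ‖s₁ x - s₂ x‖ ≤ ε) ∧
          ‖LinearMap.toContinuousLinearMap (s₁.linear - s₂.linear)‖ ≤ C * ε * Lam := by
  refine ⟨2 * m + 1, by positivity, ?_⟩
  intro v hv I hI hIc s₁ s₂ ε Lam hA hB hLam
  -- basic facts
  obtain ⟨lam₀, hnorm₀, i₀, hLam₀⟩ := hLam.1
  haveI : Nonempty (Fin m) := ⟨i₀⟩
  have hLamnn : 0 ≤ Lam := hLam₀ ▸ abs_nonneg _
  -- each vertex difference is small
  have hvert : ∀ j : Fin (m + 1), ‖s₁ (v j) - s₂ (v j)‖ ≤ ε := by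
    intro j
    by_cases hj : j ∈ I
    · rw [hA (v j) (subset_convexHull ℝ _ ⟨j, hj, rfl⟩)]
      simp
      have := hIc
      obtain ⟨k, hk⟩ := hIc
      have := hB (v k) (subset_convexHull ℝ _ ⟨k, by simpa using hk, rfl⟩)
      exact le_trans (norm_nonneg _) this
    · exact hB (v j) (subset_convexHull ℝ _ ⟨j, by simpa using hj, rfl⟩)
  have hε : 0 ≤ ε := by
    obtain ⟨k, hk⟩ := hIc
    exact le_trans (norm_nonneg _)
      (hB (v k) (subset_convexHull ℝ _ ⟨k, by simpa using hk, rfl⟩))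
  -- C⁰ bound on the whole simplex
  have hC0 : ∀ x ∈ convexHull ℝ (Set.range v), ‖s₁ x - s₂ x‖ ≤ ε := by
    intro x hx
    rw [convexHull_range_eq_exists_affineCombination] at hx
    obtain ⟨s, w, hw0, hw1, rfl⟩ := hx
    rw [s.map_affineCombination v w hw1 (f := s₁), s.map_affineCombination v w hw1 (f := s₂),
      Finset.affineCombination_eq_linear_combination _ _ _ hw1,
      Finset.affineCombination_eq_linear_combination _ _ _ hw1, ← Finset.sum_sub_distrib]
    calc ‖∑ i ∈ s, (w i • s₁ (v i) - w i • s₂ (v i))‖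
        ≤ ∑ i ∈ s, ‖w i • s₁ (v i) - w i • s₂ (v i)‖ := norm_sum_le _ _
      _ ≤ ∑ i ∈ s, w i * ε := by
          refine Finset.sum_le_sum fun i hi => ?_
          rw [← smul_sub, norm_smul, Real.norm_eq_abs, abs_of_nonneg (hw0 i hi)]
          exact mul_le_mul_of_nonneg_left (hvert i) (hw0 i hi)
      _ = ε := by rw [← Finset.sum_mul, hw1, one_mul]
  refine ⟨hC0, ?_⟩
  -- basis from the simplex edges
  have hli : LinearIndependent ℝ (fun i : Fin m => v i.succ - v 0) := by
    rw [affineIndependent_iff_linearIndependent_vsub ℝ v 0] at hv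
    have he : Function.Injective
        (fun i : Fin m => (⟨i.succ, Fin.succ_ne_zero i⟩ : {x : Fin (m + 1) // x ≠ 0})) := by
      intro a b hab
      have : a.succ = b.succ := congrArg Subtype.val hab
      exact Fin.succ_injective _ this
    have := hv.comp _ he
    exact this
  let b : Module.Basis (Fin m) ℝ (EuclideanSpace ℝ (Fin m)) :=
    basisOfLinearIndependentOfCardEqFinrank hli (by simp)
  have hb : ∀ i, b i = v i.succ - v 0 := fun i => by
    simp [b, coe_basisOfLinearIndependentOfCardEqFinrank]
  -- operator norm bound
  refine ContinuousLinearMap.opNorm_le_of_unit_norm (by positivity) ?_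
  intro x hx
  have hrepr : x = ∑ i : Fin m, b.repr x i • (v i.succ - v 0) := by
    conv_lhs => rw [← b.sum_repr x]
    exact Finset.sum_congr rfl fun i _ => by rw [hb]
  have hcoef : ∀ i, |b.repr x i| ≤ Lam := by
    intro i
    refine hLam.2 ⟨fun j => b.repr x j, ?_, i, rfl⟩
    rw [← hrepr]; exact hx
  have happ : ∀ i : Fin m,
      ‖(s₁.linear - s₂.linear) (v i.succ - v 0)‖ ≤ 2 * ε := by
    intro i
    have h1 : s₁.linear (v i.succ - v 0) = s₁ (v i.succ) - s₁ (v 0) := by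
      simpa using s₁.linearMap_vsub (v i.succ) (v 0)
    have h2 : s₂.linear (v i.succ - v 0) = s₂ (v i.succ) - s₂ (v 0) := by
      simpa using s₂.linearMap_vsub (v i.succ) (v 0)
    have : (s₁.linear - s₂.linear) (v i.succ - v 0) =
        (s₁ (v i.succ) - s₂ (v i.succ)) - (s₁ (v 0) - s₂ (v 0)) := by
      rw [LinearMap.sub_apply, h1, h2]; abel
    rw [this]
    calc ‖(s₁ (v i.succ) - s₂ (v i.succ)) - (s₁ (v 0) - s₂ (v 0))‖
        ≤ ‖s₁ (v i.succ) - s₂ (v i.succ)‖ + ‖s₁ (v 0) - s₂ (v 0)‖ := norm_sub_le _ _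
      _ ≤ ε + ε := add_le_add (hvert _) (hvert _)
      _ = 2 * ε := by ring
  have hDx : (LinearMap.toContinuousLinearMap (s₁.linear - s₂.linear)) x =
      ∑ i : Fin m, b.repr x i • ((s₁.linear - s₂.linear) (v i.succ - v 0)) := by
    conv_lhs => rw [hrepr]
    simp [map_sum]
  calc ‖(LinearMap.toContinuousLinearMap (s₁.linear - s₂.linear)) x‖
      ≤ ∑ i : Fin m, ‖b.repr x i • ((s₁.linear - s₂.linear) (v i.succ - v 0))‖ := by
        rw [hDx]; exact norm_sum_le _ _
    _ ≤ ∑ i : Fin m, Lam * (2 * ε) := by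
        refine Finset.sum_le_sum fun i _ => ?_
        rw [norm_smul, Real.norm_eq_abs]
        exact mul_le_mul (hcoef i) (happ i) (norm_nonneg _) hLamnn
    _ = m * (Lam * (2 * ε)) := by simp [mul_comm]
    _ ≤ (2 * m + 1) * ε * Lam := by nlinarith [mul_nonneg hε hLamnn]
end

section
/- Let K be a simplicial complex and K' ⊂ K a subcomplex. The following are equivalent: (1) for each simplex Δ in the star of K', the set of simplices of K' contained in Δ forms a single face of Δ; (2) every simplex Δ ∈ K that equals the convex hull of the union of simplices of K' contained in Δ is itself an element of K'. -/
/-- equivalence of the two characterizations of a nice subcomplex `K' ⊆ K`: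
(1) for each simplex `Δ` in the star of `K'`, the simplices of `K'` contained in `Δ` are
exactly the faces of a single face `F` of `Δ`; (2) every `Δ ∈ K` equal to the convex hull of
the union of the simplices of `K'` contained in it belongs to `K'`. -/
theorem stmt_10 (N : ℕ) (K : Geometry.SimplicialComplex ℝ (EuclideanSpace ℝ (Fin N)))
    (K' : Set (Finset (EuclideanSpace ℝ (Fin N))))
    (hsub : K' ⊆ K.faces)
    (hdown : ∀ s ∈ K', ∀ t : Finset (EuclideanSpace ℝ (Fin N)),
      t ⊆ s → t.Nonempty → t ∈ K') :
    (∀ Δ ∈ K.faces,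
        (∃ s ∈ K', ((↑Δ : Set (EuclideanSpace ℝ (Fin N))) ∩ ↑s).Nonempty) →
        ∃ F : Finset (EuclideanSpace ℝ (Fin N)), F ⊆ Δ ∧
          ∀ s ∈ K.faces, (s ∈ K' ∧ s ⊆ Δ ↔ s ⊆ F)) ↔
    (∀ Δ ∈ K.faces,
        convexHull ℝ (↑Δ : Set (EuclideanSpace ℝ (Fin N))) =
          convexHull ℝ (⋃ s ∈ {s | s ∈ K' ∧ s ⊆ Δ},
            (↑s : Set (EuclideanSpace ℝ (Fin N)))) →
        Δ ∈ K') := by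
  classical
  constructor
  · intro h1 Δ hΔ hhull
    -- some member of K' is contained in Δ
    have hne : ∃ s ∈ K', s ⊆ Δ := by
      by_contra h
      push_neg at h
      have : (⋃ s ∈ {s | s ∈ K' ∧ s ⊆ Δ}, (↑s : Set (EuclideanSpace ℝ (Fin N)))) = ∅ := by
        apply Set.eq_empty_iff_forall_notMem.2
        intro x hx
        obtain ⟨s, hs, hxs⟩ := Set.mem_iUnion₂.1 hx
        exact h s hs.1 hs.2
      rw [this, convexHull_empty] at hhull
      obtain ⟨v, hv⟩ := Finset.nonempty_of_ne_empty (fun h => K.empty_notMem (h ▸ hΔ))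
      exact absurd hhull (by
        intro heq
        have : (v : EuclideanSpace ℝ (Fin N)) ∈ (∅ : Set (EuclideanSpace ℝ (Fin N))) := by
          rw [← heq]; exact subset_convexHull ℝ _ hv
        exact this)
    obtain ⟨s₀, hs₀, hs₀Δ⟩ := hne
    obtain ⟨v₀, hv₀⟩ := Finset.nonempty_of_ne_empty (fun h => K.empty_notMem (h ▸ hsub hs₀))
    obtain ⟨F, hFΔ, hF⟩ := h1 Δ hΔ ⟨s₀, hs₀, v₀, hs₀Δ hv₀, hv₀⟩
    have hs₀F : s₀ ⊆ F := (hF s₀ (hsub hs₀)).1 ⟨hs₀, hs₀Δ⟩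
    have hFfaces : F ∈ K.faces :=
      K.down_closed hΔ hFΔ ⟨v₀, hs₀F hv₀⟩
    -- every vertex of Δ lies in convexHull F
    have hsubF : (⋃ s ∈ {s | s ∈ K' ∧ s ⊆ Δ}, (↑s : Set (EuclideanSpace ℝ (Fin N))))
        ⊆ (↑F : Set (EuclideanSpace ℝ (Fin N))) := by
      intro x hx
      obtain ⟨s, hs, hxs⟩ := Set.mem_iUnion₂.1 hx
      exact (hF s (hsub hs.1)).1 hs hxs
    have hΔF : Δ ⊆ F := by
      intro v hv
      have hvK : {v} ∈ K.faces :=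
        K.down_closed hΔ (Finset.singleton_subset_iff.2 hv) (Finset.singleton_nonempty v)
      have : v ∈ convexHull ℝ (↑F : Set (EuclideanSpace ℝ (Fin N))) := by
        have hcv : v ∈ convexHull ℝ (↑Δ : Set (EuclideanSpace ℝ (Fin N))) :=
          subset_convexHull ℝ _ hv
        rw [hhull] at hcv
        exact convexHull_mono hsubF hcv
      exact (Geometry.SimplicialComplex.vertex_mem_convexHull_iff hvK hFfaces).1 this
    exact ((hF Δ hΔ).2 hΔF).1
  · intro h2 Δ hΔ _
    refine ⟨Δ.filter (fun v => {v} ∈ K'), Finset.filter_subset _ _, fun s hs => ?_⟩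
    constructor
    · rintro ⟨hsK', hsΔ⟩ v hv
      exact Finset.mem_filter.2 ⟨hsΔ hv, hdown s hsK' {v}
        (Finset.singleton_subset_iff.2 hv) ⟨v, Finset.mem_singleton_self v⟩⟩
    · intro hsF
      have hsΔ : s ⊆ Δ := hsF.trans (Finset.filter_subset _ _)
      refine ⟨h2 s hs ?_, hsΔ⟩
      apply le_antisymm
      · apply convexHull_mono
        intro v hv
        exact Set.mem_iUnion₂.2 ⟨{v}, ⟨(Finset.mem_filter.1 (hsF hv)).2,
          Finset.singleton_subset_iff.2 hv⟩, by simp⟩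
      · apply convexHull_mono
        intro x hx
        obtain ⟨t, ht, hxt⟩ := Set.mem_iUnion₂.1 hx
        exact ht.2 hxt
end

section
/- Let Δ ⊂ ℝ^N be a linear m-simplex (m ≥ 1), let b be its barycenter, and let S be a subdivision of the boundary ∂Δ into linear simplices. Then the collection of joins {conv(b ∪ σ) : σ ∈ S} together with their faces forms a subdivision of Δ (the barycentric cone off): the union of these simplices is Δ, each join conv(b ∪ σ) is a linear simplex of dimension dim(σ)+1, and any two of them intersect in a common face. -/
open scoped Classical
open Finset

section Helpers

variable {n : ℕ} {E : Type*} [AddCommGroup E] [Module ℝ E]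

private lemma key_sum {A : Set (Fin n)} (s : Finset A) (w : A → ℝ)
    {M : Type*} [AddCommMonoid M] [Module ℝ M] (g : Fin n → M) :
    ∑ j, (if h : j ∈ A then (if (⟨j, h⟩ : A) ∈ s then w ⟨j, h⟩ else 0) else 0) • g j
      = ∑ x ∈ s, w x • g ↑x := by
  rw [← Finset.sum_subset (Finset.subset_univ (s.map (Function.Embedding.subtype _)))
    (fun j _ hj => ?_)]
  · rw [Finset.sum_map]
    refine Finset.sum_congr rfl fun x hx => ?_
    simp [hx]
  · suffices hz : (if h : j ∈ A then (if (⟨j, h⟩ : A) ∈ s then w ⟨j, h⟩ else 0) else 0) = 0 by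
      rw [hz, zero_smul]
    by_cases h : j ∈ A
    · rw [dif_pos h, if_neg]
      intro hmem
      exact hj (Finset.mem_map.2 ⟨⟨j, h⟩, hmem, rfl⟩)
    · rw [dif_neg h]

/-- Extract weights indexed by `Fin n` from a membership in the convex hull of `v '' A`. -/
private lemma hull_weights {A : Set (Fin n)} (v : Fin n → E) {y : E}
    (hy : y ∈ convexHull ℝ (v '' A)) :
    ∃ u : Fin n → ℝ, (∀ j, 0 ≤ u j) ∧ (∀ j, j ∉ A → u j = 0) ∧
      ∑ j, u j = 1 ∧ ∑ j, u j • v j = y := by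
  rw [Set.image_eq_range, convexHull_range_eq_exists_affineCombination] at hy
  obtain ⟨s, w, hw0, hw1, hwy⟩ := hy
  rw [Finset.affineCombination_eq_linear_combination _ _ _ hw1] at hwy
  refine ⟨fun j => if h : j ∈ A then (if (⟨j, h⟩ : A) ∈ s then w ⟨j, h⟩ else 0) else 0,
    ?_, ?_, ?_, ?_⟩
  · intro j
    dsimp only
    split_ifs with h1 h2
    · exact hw0 _ h2
    · exact le_refl 0
    · exact le_refl 0
  · intro j hj; dsimp only; rw [dif_neg hj]
  · have h1 := key_sum s w (fun _ => (1 : ℝ))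
    simp only [smul_eq_mul, mul_one] at h1
    rw [h1]; exact hw1
  · exact (key_sum s w v).trans hwy

/-- Same for the affine span (no sign condition). -/
private lemma span_weights {A : Set (Fin n)} (v : Fin n → E) {y : E}
    (hy : y ∈ affineSpan ℝ (v '' A)) :
    ∃ u : Fin n → ℝ, (∀ j, j ∉ A → u j = 0) ∧
      ∑ j, u j = 1 ∧ ∑ j, u j • v j = y := by
  rw [Set.image_eq_range] at hy
  obtain ⟨s, w, hw1, hwy⟩ := eq_affineCombination_of_mem_affineSpan hy
  rw [Finset.affineCombination_eq_linear_combination _ _ _ hw1] at hwy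
  refine ⟨fun j => if h : j ∈ A then (if (⟨j, h⟩ : A) ∈ s then w ⟨j, h⟩ else 0) else 0,
    ?_, ?_, ?_⟩
  · intro j hj; dsimp only; rw [dif_neg hj]
  · have h1 := key_sum s w (fun _ => (1 : ℝ))
    simp only [smul_eq_mul, mul_one] at h1
    rw [h1]; exact hw1
  · exact (key_sum s w v).trans hwy.symm

/-- A combination with weights supported on `A` lies in the hull of `v '' A`. -/
private lemma combo_mem_hull {A : Set (Fin n)} (v : Fin n → E) (u : Fin n → ℝ)
    (h0 : ∀ j, 0 ≤ u j) (hA : ∀ j, j ∉ A → u j = 0) (h1 : ∑ j, u j = 1) :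
    ∑ j, u j • v j ∈ convexHull ℝ (v '' A) := by
  classical
  set T : Finset (Fin n) := Finset.univ.filter (fun j => j ∈ A) with hT
  have hsub : ∀ j ∈ Finset.univ, j ∉ T → u j = 0 := by
    intro j _ hj
    exact hA j (by simpa [hT] using hj)
  have hsum : ∑ j ∈ T, u j = 1 := by
    rw [← h1]
    exact (Finset.sum_subset (Finset.filter_subset _ _)
      (fun j hj hj' => hsub j hj hj')).symm ▸ rfl
  have hsmul : ∑ j ∈ T, u j • v j = ∑ j, u j • v j := by
    refine Finset.sum_subset (Finset.filter_subset _ _) (fun j hj hj' => ?_)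
    rw [hsub j hj hj', zero_smul]
  rw [← hsmul, ← Finset.centerMass_eq_of_sum_1 _ _ hsum]
  exact Finset.centerMass_mem_convexHull _ (fun i _ => h0 i) (by rw [hsum]; exact one_pos)
    (fun i hi => Set.mem_image_of_mem v (by simpa [hT] using hi))

/-- Uniqueness of barycentric coordinates. -/
private lemma weights_unique {v : Fin n → E} (hv : AffineIndependent ℝ v)
    {t t' : Fin n → ℝ} (h1 : ∑ j, t j = 1) (h1' : ∑ j, t' j = 1)
    (he : ∑ j, t j • v j = ∑ j, t' j • v j) : t = t' := by
  refine (affineIndependent_iff_eq_of_fintype_affineCombination_eq ℝ v).mp hv t t' h1 h1' ?_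
  rw [Finset.affineCombination_eq_linear_combination _ _ _ h1,
    Finset.affineCombination_eq_linear_combination _ _ _ h1']
  exact he

end Helpers

section Helpers2
variable {m : ℕ} {E : Type*} [AddCommGroup E] [Module ℝ E]

private lemma hc_sum : ∑ _j : Fin (m+1), ((m:ℝ)+1)⁻¹ = 1 := by
  have hne : ((m:ℝ)+1) ≠ 0 := by positivity
  rw [Finset.sum_const, Finset.card_univ, Fintype.card_fin, nsmul_eq_mul]
  push_cast
  field_simp

private lemma hc_pos : 0 < ((m:ℝ)+1)⁻¹ := by positivity

/-- Coordinates of a point on the segment from `b` to a point of the facet hull. -/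
private lemma cone_coord (v : Fin (m+1) → E) {b : E}
    (hb : b = ∑ j, ((m:ℝ)+1)⁻¹ • v j) {i : Fin (m+1)} {s : ℝ} {y : E}
    (hs0 : 0 ≤ s) (hs1 : s ≤ 1) (hy : y ∈ convexHull ℝ (v '' {j | j ≠ i})) :
    ∃ t : Fin (m+1) → ℝ, (∀ j, 0 ≤ t j) ∧ ∑ j, t j = 1 ∧
      ∑ j, t j • v j = s • b + (1-s) • y ∧
      t i = s * ((m:ℝ)+1)⁻¹ ∧ ∀ j, s * ((m:ℝ)+1)⁻¹ ≤ t j := by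
  obtain ⟨u, hu0, huA, hu1, huy⟩ := hull_weights v hy
  have hui : u i = 0 := huA i (by simp)
  have hcpos := hc_pos (m := m)
  refine ⟨fun j => s * ((m:ℝ)+1)⁻¹ + (1-s) * u j, fun j => ?_, ?_, ?_, ?_, fun j => ?_⟩
  · have h1 := hu0 j
    dsimp only
    nlinarith
  · rw [Finset.sum_add_distrib, ← Finset.mul_sum, ← Finset.mul_sum, hu1, hc_sum]
    ring
  · have hsplit : ∑ j, (s * ((m:ℝ)+1)⁻¹ + (1-s) * u j) • v j
        = s • ∑ j, ((m:ℝ)+1)⁻¹ • v j + (1-s) • ∑ j, u j • v j := by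
      rw [Finset.smul_sum, Finset.smul_sum, ← Finset.sum_add_distrib]
      refine Finset.sum_congr rfl fun j _ => ?_
      rw [add_smul, mul_smul, mul_smul]
    rw [hsplit, ← hb, huy]
  · dsimp only
    rw [hui]
    ring
  · have h1 := hu0 j
    dsimp only
    nlinarith

end Helpers2
section Helpers3
variable {m : ℕ} {E : Type*} [AddCommGroup E] [Module ℝ E]

private lemma cone_unique [NoZeroSMulDivisors ℝ E] {v : Fin (m+1) → E}
    (hv : AffineIndependent ℝ v) {b : E} (hb : b = ∑ j, ((m:ℝ)+1)⁻¹ • v j)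
    {i i' : Fin (m+1)} {s s' : ℝ} {y y' : E}
    (hs0 : 0 ≤ s) (hs1 : s ≤ 1) (hs0' : 0 ≤ s') (hs1' : s' ≤ 1)
    (hy : y ∈ convexHull ℝ (v '' {j | j ≠ i})) (hy' : y' ∈ convexHull ℝ (v '' {j | j ≠ i'}))
    (heq : s • b + (1-s) • y = s' • b + (1-s') • y') :
    s = s' ∧ (s ≠ 1 → y = y') := by
  obtain ⟨t, ht0, ht1, htc, hti, htlb⟩ := cone_coord v hb hs0 hs1 hy
  obtain ⟨t', ht0', ht1', htc', hti', htlb'⟩ := cone_coord v hb hs0' hs1' hy'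
  have htt : t = t' := weights_unique hv ht1 ht1' (by rw [htc, htc', heq])
  have hcpos := hc_pos (m := m)
  have hss : s = s' := by
    have h1 : s * ((m:ℝ)+1)⁻¹ = t i := hti.symm
    have h2 : s' * ((m:ℝ)+1)⁻¹ ≤ t i := htt ▸ htlb' i
    have h3 : s' * ((m:ℝ)+1)⁻¹ = t' i' := hti'.symm
    have h4 : s * ((m:ℝ)+1)⁻¹ ≤ t' i' := htt ▸ htlb i'
    nlinarith
  refine ⟨hss, fun hne => ?_⟩
  have h5 : (1-s) • y = (1-s) • y' := by
    have := heq
    rw [← hss] at this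
    exact add_left_cancel this
  have h6 : (1:ℝ) - s ≠ 0 := by
    intro h; exact hne (by linarith [sub_eq_zero.mp h])
  exact smul_right_injective E h6 h5

private lemma b_not_mem_span {v : Fin (m+1) → E} (hv : AffineIndependent ℝ v)
    {b : E} (hb : b = ∑ j, ((m:ℝ)+1)⁻¹ • v j) (i : Fin (m+1)) :
    b ∉ affineSpan ℝ (v '' {j | j ≠ i}) := by
  intro hmem
  obtain ⟨u, huA, hu1, huy⟩ := span_weights v hmem
  have huc : u = fun _ => ((m:ℝ)+1)⁻¹ :=
    weights_unique hv hu1 hc_sum (huy.trans hb)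
  have h0 : u i = 0 := huA i (by simp)
  rw [huc] at h0
  exact absurd h0 (ne_of_gt (hc_pos (m := m)))

private lemma indep_insert [DecidableEq E] {σ : Finset E} {b : E}
    (hσ : AffineIndependent ℝ (fun x : (σ : Set E) => (x : E)))
    (hbs : b ∉ affineSpan ℝ (σ : Set E)) (hbσ : b ∉ σ) :
    AffineIndependent ℝ
      (fun p : ((insert b σ : Finset E) : Set E) => (p : E)) := by
  have hbmem : b ∈ ((insert b σ : Finset E) : Set E) := by simp
  set i : ((insert b σ : Finset E) : Set E) := ⟨b, hbmem⟩ with hi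
  have hmem : ∀ x : ((insert b σ : Finset E) : Set E), x ≠ i → (x : E) ∈ σ := by
    rintro ⟨z, hz⟩ hxi
    rcases Finset.mem_insert.mp (Finset.mem_coe.mp hz) with h | h
    · exact absurd (Subtype.ext h) hxi
    · exact h
  let e : {y : ((insert b σ : Finset E) : Set E) // y ≠ i} ↪ (σ : Set E) :=
    ⟨fun x => ⟨(x.1 : E), hmem x.1 x.2⟩, by
      rintro ⟨x, hx⟩ ⟨x', hx'⟩ h
      have h' := congrArg Subtype.val h
      exact Subtype.ext (Subtype.ext h')⟩
  have himg : ((fun p : ((insert b σ : Finset E) : Set E) => (p : E)) '' {x | x ≠ i})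
      = (σ : Set E) := by
    ext z
    constructor
    · rintro ⟨x, hx, rfl⟩
      exact hmem x hx
    · intro hz
      refine ⟨⟨z, by simp [Finset.mem_coe.mp hz]⟩, ?_, rfl⟩
      intro h
      rw [hi] at h
      apply hbσ
      rw [← show z = b from congrArg Subtype.val h]
      exact Finset.mem_coe.mp hz
  refine AffineIndependent.affineIndependent_of_notMem_span (i := i) ?_ ?_
  · exact hσ.comp_embedding e
  · rw [himg]
    exact hbs

end Helpers3

/-- barycentric cone off. Given an `m`-simplex with vertices `v`,
barycenter `b`, and a subdivision `S` of its boundary, the joins `conv({b} ∪ σ)` for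
`σ ∈ S` cover the simplex, each join is a simplex of one dimension higher (its vertex
set `insert b σ` is affinely independent with `σ.card + 1` vertices), and any two joins
intersect in the common face `conv({b} ∪ (σ ∩ σ'))`. -/
theorem stmt_17 (N m : ℕ) (hm : 1 ≤ m)
    (v : Fin (m + 1) → EuclideanSpace ℝ (Fin N)) (hv : AffineIndependent ℝ v)
    (b : EuclideanSpace ℝ (Fin N))
    (hb : b = ((m : ℝ) + 1)⁻¹ • ∑ i, v i)
    (S : Geometry.SimplicialComplex ℝ (EuclideanSpace ℝ (Fin N)))
    (hspace : S.space = ⋃ i, convexHull ℝ (v '' {j | j ≠ i}))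
    (hfaces : ∀ σ ∈ S.faces, ∃ i,
      (↑σ : Set (EuclideanSpace ℝ (Fin N))) ⊆ convexHull ℝ (v '' {j | j ≠ i})) :
    ((⋃ σ ∈ S.faces,
        convexHull ℝ (↑(insert b σ) : Set (EuclideanSpace ℝ (Fin N)))) =
      convexHull ℝ (Set.range v)) ∧
    (∀ σ ∈ S.faces,
      AffineIndependent ℝ
        (fun p : ((insert b σ : Finset (EuclideanSpace ℝ (Fin N))) :
            Set (EuclideanSpace ℝ (Fin N))) => (p : EuclideanSpace ℝ (Fin N))) ∧
      (insert b σ).card = σ.card + 1) ∧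
    (∀ σ ∈ S.faces, ∀ σ' ∈ S.faces,
      convexHull ℝ (↑(insert b σ) : Set (EuclideanSpace ℝ (Fin N))) ∩
          convexHull ℝ (↑(insert b σ') : Set (EuclideanSpace ℝ (Fin N))) =
        convexHull ℝ (↑(insert b (σ ∩ σ')) : Set (EuclideanSpace ℝ (Fin N)))) := by
  have hb' : b = ∑ j, ((m:ℝ)+1)⁻¹ • v j := by rw [hb, Finset.smul_sum]
  have hmul : ((m:ℝ)+1) * ((m:ℝ)+1)⁻¹ = 1 := by
    have : ((m:ℝ)+1) ≠ 0 := by positivity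
    field_simp
  have hbhull : b ∈ convexHull ℝ (Set.range v) := by
    have h := combo_mem_hull (A := Set.univ) v (fun _ => ((m:ℝ)+1)⁻¹)
      (fun _ => le_of_lt hc_pos) (fun j hj => absurd (Set.mem_univ j) hj) hc_sum
    rw [Set.image_univ] at h
    rwa [← hb'] at h
  -- each cone is inside the simplex
  have cone_sub : ∀ σ ∈ S.faces,
      convexHull ℝ (↑(insert b σ) : Set (EuclideanSpace ℝ (Fin N))) ⊆ convexHull ℝ (Set.range v) := by
    intro σ hσ
    obtain ⟨i, hσi⟩ := hfaces σ hσ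
    rw [Finset.coe_insert]
    refine convexHull_min (Set.insert_subset hbhull ?_) (convex_convexHull ℝ _)
    intro z hz
    exact convexHull_mono (Set.image_subset_range v _) (hσi hz)
  -- decomposition of cone membership
  have decompose : ∀ σ ∈ S.faces, ∀ x ∈ convexHull ℝ (↑(insert b σ) : Set (EuclideanSpace ℝ (Fin N))),
      ∃ s : ℝ, 0 ≤ s ∧ s ≤ 1 ∧ ∃ y ∈ convexHull ℝ (↑σ : Set (EuclideanSpace ℝ (Fin N))),
        x = s • b + (1-s) • y := by
    intro σ hσ x hx
    have hne : (↑σ : Set (EuclideanSpace ℝ (Fin N))).Nonempty :=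
      Finset.coe_nonempty.mpr (Finset.nonempty_iff_ne_empty.2
        (fun h => S.empty_notMem (h ▸ hσ)))
    rw [Finset.coe_insert, convexHull_insert hne, mem_convexJoin] at hx
    obtain ⟨a, ha, y, hy, hseg⟩ := hx
    rw [Set.mem_singleton_iff] at ha
    subst ha
    obtain ⟨p, q, hp, hq, hpq, rfl⟩ := hseg
    exact ⟨p, hp, by linarith, y, hy, by rw [show (1:ℝ) - p = q by linarith]⟩
  -- membership of a cone point with explicit coordinates
  have cone_mem : ∀ (σ : Finset (EuclideanSpace ℝ (Fin N))) (s : ℝ) (y : EuclideanSpace ℝ (Fin N)), 0 ≤ s → s ≤ 1 →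
      y ∈ convexHull ℝ (↑σ : Set (EuclideanSpace ℝ (Fin N))) →
      s • b + (1-s) • y ∈ convexHull ℝ (↑(insert b σ) : Set (EuclideanSpace ℝ (Fin N))) := by
    intro σ s y hs0 hs1 hy
    rw [Finset.coe_insert]
    exact (convex_convexHull ℝ _)
      (subset_convexHull ℝ _ (Set.mem_insert b _))
      (convexHull_mono (Set.subset_insert _ _) hy) hs0 (by linarith) (by ring)
  refine ⟨?_, ?_, ?_⟩
  · -- union of cones
    apply Set.Subset.antisymm
    · exact Set.iUnion₂_subset cone_sub
    · intro x hx
      rw [← Set.image_univ] at hx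
      obtain ⟨t, ht0, -, ht1, htx⟩ := hull_weights v hx
      obtain ⟨i, -, hmin⟩ := Finset.exists_min_image Finset.univ t ⟨0, Finset.mem_univ 0⟩
      have hmin' : ∀ j, t i ≤ t j := fun j => hmin j (Finset.mem_univ j)
      set s : ℝ := ((m:ℝ)+1) * t i with hs
      have hs0 : 0 ≤ s := by
        have := ht0 i
        have : (0:ℝ) ≤ (m:ℝ)+1 := by positivity
        nlinarith [ht0 i]
      have hs1 : s ≤ 1 := by
        have hsum : ∑ _j : Fin (m+1), t i = s := by
          rw [Finset.sum_const, Finset.card_univ, Fintype.card_fin, nsmul_eq_mul, hs]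
          push_cast; ring
        calc s = ∑ _j : Fin (m+1), t i := hsum.symm
        _ ≤ ∑ j, t j := Finset.sum_le_sum (fun j _ => hmin' j)
        _ = 1 := ht1
      by_cases hcase : s = 1
      · -- x is the barycenter
        have htall : ∀ j, t j = t i := by
          intro j
          have hzero : ∑ j, (t j - t i) = 0 := by
            rw [Finset.sum_sub_distrib, ht1, Finset.sum_const, Finset.card_univ,
              Fintype.card_fin, nsmul_eq_mul]
            push_cast
            rw [show ((m:ℝ)+1) * t i = s from rfl, hcase]
            ring
          have := (Finset.sum_eq_zero_iff_of_nonneg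
            (fun j _ => sub_nonneg.mpr (hmin' j))).mp hzero j (Finset.mem_univ j)
          linarith [sub_eq_zero.mp this]
        have hti : t i = ((m:ℝ)+1)⁻¹ := by
          have h1 : ((m:ℝ)+1) * t i = 1 := hcase
          have h2 : ((m:ℝ)+1) ≠ 0 := by positivity
          field_simp
          linarith
        have hxb : x = b := by
          rw [← htx, hb']
          exact Finset.sum_congr rfl fun j _ => by rw [htall j, hti]
        -- find some face
        have hvmem : v ⟨1, by omega⟩ ∈ S.space := by
          rw [hspace]
          refine Set.mem_iUnion.2 ⟨0, subset_convexHull ℝ _ ?_⟩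
          exact Set.mem_image_of_mem v (by rw [Set.mem_setOf_eq]; intro h; have h' := congrArg Fin.val h; simp at h')
        rw [Geometry.SimplicialComplex.mem_space_iff] at hvmem
        obtain ⟨σ0, hσ0, -⟩ := hvmem
        refine Set.mem_biUnion hσ0 ?_
        rw [hxb]
        exact subset_convexHull ℝ _ (by simp)
      · have hslt : s < 1 := lt_of_le_of_ne hs1 hcase
        have hsne : (1:ℝ) - s ≠ 0 := by intro h; linarith [sub_eq_zero.mp h]
        have hspos : (0:ℝ) < 1 - s := by linarith
        set u : Fin (m+1) → ℝ := fun j => (t j - t i) / (1-s) with hu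
        have hu0 : ∀ j, 0 ≤ u j := fun j =>
          div_nonneg (sub_nonneg.mpr (hmin' j)) (le_of_lt hspos)
        have huA : ∀ j, j ∉ {j | j ≠ i} → u j = 0 := by
          intro j hj
          have : j = i := by simpa using hj
          rw [hu]; dsimp only; rw [this, sub_self, zero_div]
        have hu1 : ∑ j, u j = 1 := by
          rw [hu]
          dsimp only
          rw [← Finset.sum_div, Finset.sum_sub_distrib, ht1, Finset.sum_const,
            Finset.card_univ, Fintype.card_fin, nsmul_eq_mul]
          push_cast
          rw [show ((m:ℝ)+1) * t i = s from rfl]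
          field_simp
        have hyhull := combo_mem_hull v u hu0 huA hu1
        set y : EuclideanSpace ℝ (Fin N) := ∑ j, u j • v j with hy
        have hymem : y ∈ S.space := by
          rw [hspace]
          exact Set.mem_iUnion.2 ⟨i, hyhull⟩
        rw [Geometry.SimplicialComplex.mem_space_iff] at hymem
        obtain ⟨σ, hσ, hyσ⟩ := hymem
        have hxeq : x = s • b + (1-s) • y := by
          have hsplit : s • b + (1-s) • y
              = ∑ j, (s * ((m:ℝ)+1)⁻¹ + (1-s) * u j) • v j := by
            rw [hb', hy, Finset.smul_sum, Finset.smul_sum, ← Finset.sum_add_distrib]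
            exact Finset.sum_congr rfl fun j _ => by module
          rw [hsplit, ← htx]
          refine Finset.sum_congr rfl fun j _ => ?_
          congr 1
          have h1 : s * ((m:ℝ)+1)⁻¹ = t i := by
            rw [hs]
            rw [mul_comm ((m:ℝ)+1) (t i), mul_assoc, hmul, mul_one]
          have h2 : (1-s) * u j = t j - t i := by
            rw [hu]; dsimp only
            rw [mul_comm, div_mul_cancel₀ _ hsne]
          rw [h1, h2]; ring
        refine Set.mem_biUnion hσ ?_
        rw [hxeq]
        exact cone_mem σ s y hs0 hs1 hyσ
  · -- affine independence and cardinality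
    intro σ hσ
    obtain ⟨i, hσi⟩ := hfaces σ hσ
    have hspan : b ∉ affineSpan ℝ (↑σ : Set (EuclideanSpace ℝ (Fin N))) := by
      intro hmem
      have h1 : affineSpan ℝ (↑σ : Set (EuclideanSpace ℝ (Fin N))) ≤ affineSpan ℝ (v '' {j | j ≠ i}) := by
        have := affineSpan_mono ℝ hσi
        rwa [affineSpan_convexHull] at this
      exact b_not_mem_span hv hb' i (h1 hmem)
    have hbσ : b ∉ σ := fun h => hspan (subset_affineSpan ℝ _ (Finset.mem_coe.2 h))
    exact ⟨indep_insert (S.indep hσ) hspan hbσ, Finset.card_insert_of_notMem hbσ⟩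
  · -- intersections
    intro σ hσ σ' hσ'
    apply Set.Subset.antisymm
    · rintro x ⟨hx1, hx2⟩
      obtain ⟨i, hσi⟩ := hfaces σ hσ
      obtain ⟨i', hσi'⟩ := hfaces σ' hσ'
      obtain ⟨s, hs0, hs1, y, hyσ, hxeq⟩ := decompose σ hσ x hx1
      obtain ⟨s', hs0', hs1', y', hyσ', hxeq'⟩ := decompose σ' hσ' x hx2
      have hyF : y ∈ convexHull ℝ (v '' {j | j ≠ i}) :=
        convexHull_min hσi (convex_convexHull ℝ _) hyσ
      have hyF' : y' ∈ convexHull ℝ (v '' {j | j ≠ i'}) :=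
        convexHull_min hσi' (convex_convexHull ℝ _) hyσ'
      obtain ⟨hss, hyy⟩ := cone_unique hv hb' hs0 hs1 hs0' hs1' hyF hyF'
        (by rw [← hxeq, ← hxeq'])
      by_cases h1 : s = 1
      · have hxb : x = b := by rw [hxeq, h1]; simp
        rw [hxb]
        exact subset_convexHull ℝ _ (by simp)
      · have hyeq : y = y' := hyy h1
        have hyint : y ∈ convexHull ℝ (↑σ : Set (EuclideanSpace ℝ (Fin N))) ∩ convexHull ℝ (↑σ' : Set (EuclideanSpace ℝ (Fin N))) :=
          ⟨hyσ, hyeq ▸ hyσ'⟩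
        have hycap := S.inter_subset_convexHull hσ hσ' hyint
        rw [hxeq]
        exact cone_mem (σ ∩ σ') s y hs0 hs1 (by exact_mod_cast hycap)
    · apply Set.subset_inter
      · exact convexHull_mono (Finset.coe_subset.mpr
          (Finset.insert_subset_insert _ Finset.inter_subset_left))
      · exact convexHull_mono (Finset.coe_subset.mpr
          (Finset.insert_subset_insert _ Finset.inter_subset_right))
end
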